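/- Let μ ≠ 0 and C ∈ ℝ. The function Z(t) = −(1/μ)(1 + W(e^{−Cμ² − μ² t − 1})), where W is the principal branch of the Lambert W function, satisfies the ODE Z'(t) = μ + 1/Z(t) on any interval where Z(t) ≠ 0. -/

import Mathlib

open Real

/-- with `W` the principal branch of the Lambert W function (characterized
on `(0,∞)` by `W(x) e^{W(x)} = x` and `W'(x) = W(x)/(x(1+W(x)))`), the function
`Z(t) = −(1/μ)(1 + W(e^{−Cμ² − μ²t − 1}))` satisfies `Z'(t) = μ + 1/Z(t)` wherever
`Z(t) ≠ 0`. -/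
theorem stmt_16 (μ C : ℝ) (hμ : μ ≠ 0) (W : ℝ → ℝ)
    (hW : ∀ x ∈ Set.Ioi (0:ℝ), W x * Real.exp (W x) = x)
    (hW' : ∀ x ∈ Set.Ioi (0:ℝ), HasDerivAt W (W x / (x * (1 + W x))) x)
    (Z : ℝ → ℝ)
    (hZ : ∀ t : ℝ, Z t = -(1/μ) * (1 + W (Real.exp (-C * μ^2 - μ^2 * t - 1)))) :
    ∀ t : ℝ, Z t ≠ 0 → HasDerivAt Z (μ + 1 / Z t) t := by
  intro t hZt
  set E : ℝ := Real.exp (-C * μ^2 - μ^2 * t - 1) with hE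
  have hEpos : (0:ℝ) < E := Real.exp_pos _
  have h1 : HasDerivAt (fun s : ℝ => -C * μ^2 - μ^2 * s - 1) (-μ^2) t := by
    have := (((hasDerivAt_id t).const_mul (μ^2)).const_sub (-C * μ^2)).sub_const 1
    simpa using this
  have h2 : HasDerivAt (fun s : ℝ => Real.exp (-C * μ^2 - μ^2 * s - 1)) (E * -μ^2) t :=
    h1.exp
  have h3 : HasDerivAt (fun s : ℝ => W (Real.exp (-C * μ^2 - μ^2 * s - 1)))
      (W E / (E * (1 + W E)) * (E * -μ^2)) t := (hW' E hEpos).comp t h2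
  have h4 : HasDerivAt Z (-(1/μ) * (W E / (E * (1 + W E)) * (E * -μ^2))) t := by
    have : Z = fun s : ℝ => -(1/μ) * (1 + W (Real.exp (-C * μ^2 - μ^2 * s - 1))) :=
      funext hZ
    rw [this]
    exact (h3.const_add 1).const_mul _
  have hne : 1 + W E ≠ 0 := by
    intro h
    apply hZt
    rw [hZ t, ← hE, h, mul_zero]
  have heq : -(1/μ) * (W E / (E * (1 + W E)) * (E * -μ^2)) = μ + 1 / Z t := by
    rw [hZ t, ← hE]
    have hne2 : (-1:ℝ) - W E ≠ 0 := by intro h; apply hne; linarith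
    field_simp [hμ, hne, hne2]
    ring
  rwa [heq] at h4
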